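/- With s_0 = 0, s_1 = a_1 − 1 and s_k = (a_1 − 1) + a_2 + ⋯ + a_k for k ≥ 2, the quantities l_n, r_n of the recursion satisfy, for every k ≥ 0 and every n with s_k < n ≤ s_{k+1}: r_n > l_n if k is even, and l_n > r_n if k is odd. In particular l_n ≠ r_n for all n. -/

import Mathlib

open Set

noncomputable def rotR (α : ℝ) (x : ℝ) : ℝ := Int.fract (x + α)

noncomputable def codeR (α : ℝ) (x : ℝ) : Bool :=
  if Int.fract x < 1 - α then false else true

noncomputable def LangR (α : ℝ) : Set (List Bool) :=
  {w | ∃ x ∈ Set.Ico (0 : ℝ) 1, ∃ k : ℕ,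
    w = (List.range w.length).map fun j => codeR α ((rotR α)^[k + j] x)}

structure SDI where
  l : ℝ
  r : ℝ
  w : List Bool
  M : List Bool
  P : List Bool

noncomputable def SDI.step (t : SDI) : SDI :=
  if t.r < t.l then ⟨t.l - t.r, t.r, t.w ++ t.P, t.M ++ t.P, t.P⟩
  else ⟨t.l, t.r - t.l, t.w ++ t.M, t.M, t.P ++ t.M⟩

noncomputable def sdi (α : ℝ) (n : ℕ) : SDI :=
  SDI.step^[n - 1] ⟨α, 1 - 2 * α, [false], [false], [true, false]⟩

noncomputable def pq (α : ℝ) (k : ℕ) : ℤ :=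
  ⌊((fun x : ℝ => Int.fract x⁻¹)^[k] α)⁻¹⌋

noncomputable def sB (α : ℝ) (k : ℕ) : ℤ :=
  if k = 0 then 0 else (pq α 0 - 2) + ∑ j ∈ Finset.Icc 2 k, pq α (j - 1)

/- ==================== auxiliary development ==================== -/

noncomputable def bet (α : ℝ) (k : ℕ) : ℝ := (fun x : ℝ => Int.fract x⁻¹)^[k] α

lemma pq_def (α : ℝ) (k : ℕ) : pq α k = ⌊(bet α k)⁻¹⌋ := rfl

lemma bet_zero (α : ℝ) : bet α 0 = α := rfl

lemma bet_succ (α : ℝ) (k : ℕ) : bet α (k + 1) = Int.fract (bet α k)⁻¹ := by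
  unfold bet
  rw [Function.iterate_succ_apply']

lemma bet_props (α : ℝ) (hirr : Irrational α) (h0 : 0 < α) (h1 : α < 1) :
    ∀ k, Irrational (bet α k) ∧ 0 < bet α k ∧ bet α k < 1 := by
  intro k
  induction k with
  | zero => exact ⟨hirr, h0, h1⟩
  | succ k ih =>
    obtain ⟨hi, hp, _⟩ := ih
    have hinv : Irrational (bet α k)⁻¹ := hi.inv
    have hfr : Irrational (Int.fract (bet α k)⁻¹) := by
      unfold Int.fract; exact Irrational.sub_intCast hinv _
    rw [bet_succ]
    refine ⟨hfr, ?_, Int.fract_lt_one _⟩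
    exact lt_of_le_of_ne (Int.fract_nonneg _) (Ne.symm (by simpa using hfr.ne_int 0))

lemma pq_lt_inv (α : ℝ) (hirr : Irrational α) (h0 : 0 < α) (h1 : α < 1) (k : ℕ) :
    (pq α k : ℝ) < (bet α k)⁻¹ := by
  obtain ⟨hi, _, _⟩ := bet_props α hirr h0 h1 k
  exact lt_of_le_of_ne (Int.floor_le _) (fun e => (hi.inv).ne_int _ e.symm)

lemma bet_succ_eq (α : ℝ) (k : ℕ) : bet α (k + 1) = (bet α k)⁻¹ - pq α k := by
  rw [bet_succ, pq_def, Int.fract]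

lemma pq_pos (α : ℝ) (hirr : Irrational α) (h0 : 0 < α) (h1 : α < 1) (k : ℕ) :
    1 ≤ pq α k := by
  obtain ⟨_, hp, hl⟩ := bet_props α hirr h0 h1 k
  have : (1 : ℝ) ≤ (bet α k)⁻¹ := by
    rw [le_inv_comm₀ one_pos hp]; simpa using hl.le
  rw [pq_def]
  exact_mod_cast Int.le_floor.2 (by exact_mod_cast this)

lemma pq_zero_ge (α : ℝ) (h0 : 0 < α) (h2 : α < 1/2) : 2 ≤ pq α 0 := by
  have : (2 : ℝ) ≤ α⁻¹ := by
    rw [le_inv_comm₀ two_pos h0]; linarith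
  rw [pq_def, bet_zero]
  exact_mod_cast Int.le_floor.2 (by exact_mod_cast this)

lemma sB_zero (α : ℝ) : sB α 0 = 0 := rfl

lemma sB_one (α : ℝ) : sB α 1 = pq α 0 - 2 := by
  unfold sB; norm_num

lemma sB_succ (α : ℝ) (k : ℕ) (hk : 1 ≤ k) : sB α (k + 1) = sB α k + pq α k := by
  unfold sB
  rw [if_neg (by omega), if_neg (by omega)]
  rw [Finset.sum_Icc_succ_top (by omega : 2 ≤ k + 1)]
  push_cast
  ring

lemma sdi_one (α : ℝ) : sdi α 1 = ⟨α, 1 - 2 * α, [false], [false], [true, false]⟩ := rfl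

lemma sdi_succ (α : ℝ) (n : ℕ) (hn : 1 ≤ n) : sdi α (n + 1) = SDI.step (sdi α n) := by
  unfold sdi
  obtain ⟨m, rfl⟩ := Nat.exists_eq_add_of_le hn
  rw [show 1 + m + 1 - 1 = m + 1 by omega, Function.iterate_succ_apply',
    show 1 + m - 1 = m by omega]

/-- phase 0 formula -/
lemma phase0 (α : ℝ) (hirr : Irrational α) (h0 : 0 < α) (h2 : α < 1/2) :
    ∀ j : ℕ, (j : ℤ) ≤ pq α 0 - 2 →
      (sdi α (j + 1)).l = α ∧ (sdi α (j + 1)).r = 1 - (j + 2) * α := by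
  have h1 : α < 1 := by linarith
  intro j
  induction j with
  | zero =>
    intro _; rw [sdi_one]
    exact ⟨rfl, by push_cast; ring⟩
  | succ j ih =>
    intro hj
    obtain ⟨hl, hr⟩ := ih (by omega)
    have hlt : (sdi α (j+1)).l < (sdi α (j+1)).r := by
      rw [hl, hr]
      have h3 : ((j : ℝ) + 3) ≤ pq α 0 := by exact_mod_cast (by omega : (j:ℤ) + 3 ≤ pq α 0)
      have := pq_lt_inv α hirr h0 h1 0
      rw [bet_zero] at this
      have : ((j : ℝ) + 3) * α < 1 := by
        calc ((j : ℝ) + 3) * α < α⁻¹ * α := by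
              apply mul_lt_mul_of_pos_right _ h0; linarith
          _ = 1 := inv_mul_cancel₀ (ne_of_gt h0)
      nlinarith
    rw [sdi_succ α (j+1) (by omega), SDI.step, if_neg (not_lt.2 hlt.le)]
    constructor
    · simpa using hl
    · simp only [hr, hl]; push_cast; ring

/-- generic inner phase lemma, "l big" version -/
lemma inner_l (α : ℝ) (n0 : ℕ) (hn0 : 1 ≤ n0) (c β : ℝ) (hc : 0 < c) (hβ : 0 < β)
    (q : ℤ) (hq : (q : ℝ) < β⁻¹)
    (hl : (sdi α n0).l = c) (hr : (sdi α n0).r = c * β) :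
    ∀ j : ℕ, (j : ℤ) ≤ q →
      (sdi α (n0 + j)).l = c * (1 - j * β) ∧ (sdi α (n0 + j)).r = c * β := by
  intro j
  induction j with
  | zero => intro _; simpa using ⟨hl, hr⟩
  | succ j ih =>
    intro hj
    obtain ⟨hl', hr'⟩ := ih (by omega)
    have hjq : ((j : ℝ) + 1) ≤ q := by exact_mod_cast (by omega : (j:ℤ) + 1 ≤ q)
    have key : ((j : ℝ) + 1) * β < 1 := by
      calc ((j : ℝ) + 1) * β < β⁻¹ * β := by
            apply mul_lt_mul_of_pos_right _ hβ; linarith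
        _ = 1 := inv_mul_cancel₀ (ne_of_gt hβ)
    have hlt : (sdi α (n0 + j)).r < (sdi α (n0 + j)).l := by
      rw [hl', hr']
      have : β < 1 - j * β := by nlinarith
      nlinarith
    rw [show n0 + (j + 1) = (n0 + j) + 1 by omega, sdi_succ α (n0 + j) (by omega),
      SDI.step, if_pos hlt]
    constructor
    · simp only [hl', hr']; push_cast; ring
    · simpa using hr'

/-- generic inner phase lemma, "r big" version -/
lemma inner_r (α : ℝ) (n0 : ℕ) (hn0 : 1 ≤ n0) (c β : ℝ) (hc : 0 < c) (hβ : 0 < β)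
    (q : ℤ) (hq : (q : ℝ) < β⁻¹)
    (hr : (sdi α n0).r = c) (hl : (sdi α n0).l = c * β) :
    ∀ j : ℕ, (j : ℤ) ≤ q →
      (sdi α (n0 + j)).r = c * (1 - j * β) ∧ (sdi α (n0 + j)).l = c * β := by
  intro j
  induction j with
  | zero => intro _; simpa using ⟨hr, hl⟩
  | succ j ih =>
    intro hj
    obtain ⟨hr', hl'⟩ := ih (by omega)
    have hjq : ((j : ℝ) + 1) ≤ q := by exact_mod_cast (by omega : (j:ℤ) + 1 ≤ q)
    have key : ((j : ℝ) + 1) * β < 1 := by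
      calc ((j : ℝ) + 1) * β < β⁻¹ * β := by
            apply mul_lt_mul_of_pos_right _ hβ; linarith
        _ = 1 := inv_mul_cancel₀ (ne_of_gt hβ)
    have hlt : (sdi α (n0 + j)).l < (sdi α (n0 + j)).r := by
      rw [hl', hr']
      have : β < 1 - j * β := by nlinarith
      nlinarith
    rw [show n0 + (j + 1) = (n0 + j) + 1 by omega, sdi_succ α (n0 + j) (by omega),
      SDI.step, if_neg (not_lt.2 hlt.le)]
    constructor
    · simp only [hl', hr']; push_cast; ring
    · simpa using hl'

noncomputable def lam (α : ℝ) (k : ℕ) : ℝ := α * ∏ i ∈ Finset.Ico 1 k, bet α i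

lemma lam_pos (α : ℝ) (hirr : Irrational α) (h0 : 0 < α) (h1 : α < 1) (k : ℕ) :
    0 < lam α k := by
  unfold lam
  exact mul_pos h0 (Finset.prod_pos fun i _ => (bet_props α hirr h0 h1 i).2.1)

lemma lam_one (α : ℝ) : lam α 1 = α := by unfold lam; simp

lemma lam_succ (α : ℝ) (k : ℕ) (hk : 1 ≤ k) : lam α (k + 1) = lam α k * bet α k := by
  unfold lam
  rw [Finset.prod_Ico_succ_top hk, mul_assoc]

noncomputable def sN (α : ℝ) (k : ℕ) : ℕ := (sB α k).toNat

lemma sB_nonneg (α : ℝ) (hirr : Irrational α) (h0 : 0 < α) (h2 : α < 1/2) (k : ℕ) :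
    0 ≤ sB α k := by
  have h1 : α < 1 := by linarith
  induction k with
  | zero => simp [sB_zero]
  | succ k ih =>
    rcases Nat.eq_zero_or_pos k with rfl | hk
    · rw [sB_one]; have := pq_zero_ge α h0 h2; omega
    · rw [sB_succ α k hk]; have := pq_pos α hirr h0 h1 k; omega

lemma sN_cast (α : ℝ) (hirr : Irrational α) (h0 : 0 < α) (h2 : α < 1/2) (k : ℕ) :
    (sN α k : ℤ) = sB α k := Int.toNat_of_nonneg (sB_nonneg α hirr h0 h2 k)

/-- the state at the start of phase `k`, for `k ≥ 1`. -/
lemma phase_start (α : ℝ) (hirr : Irrational α) (h0 : 0 < α) (h2 : α < 1/2) :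
    ∀ k : ℕ, 1 ≤ k →
      (Odd k → (sdi α (sN α k + 1)).l = lam α k ∧
        (sdi α (sN α k + 1)).r = lam α k * bet α k) ∧
      (Even k → (sdi α (sN α k + 1)).r = lam α k ∧
        (sdi α (sN α k + 1)).l = lam α k * bet α k) := by
  have h1 : α < 1 := by linarith
  intro k
  induction k with
  | zero => omega
  | succ k ih =>
    intro _
    rcases Nat.eq_zero_or_pos k with rfl | hk
    · -- k + 1 = 1
      have hj : ((sN α 1 : ℤ)) = pq α 0 - 2 := by
        rw [sN_cast α hirr h0 h2 1, sB_one]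
      obtain ⟨hl, hr⟩ := phase0 α hirr h0 h2 (sN α 1) (le_of_eq hj)
      constructor
      · intro _
        refine ⟨by rw [hl, lam_one], ?_⟩
        rw [hr, lam_one]
        have hcast : ((sN α 1 : ℝ)) = (pq α 0 : ℝ) - 2 := by exact_mod_cast hj
        rw [hcast]
        have hb : bet α 1 = α⁻¹ - pq α 0 := by rw [bet_succ_eq, bet_zero]
        rw [hb]
        field_simp
        ring
      · intro he; exact absurd he (by simp)
    · -- k ≥ 1, inductive step
      have hik := ih hk
      have hβ := bet_props α hirr h0 h1 k
      have hq := pq_lt_inv α hirr h0 h1 k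
      have hq1 := pq_pos α hirr h0 h1 k
      have hcastq : (((pq α k).toNat : ℤ)) = pq α k := Int.toNat_of_nonneg (by omega)
      have hidx : sN α k + 1 + (pq α k).toNat = sN α (k + 1) + 1 := by
        have e1 := sN_cast α hirr h0 h2 k
        have e2 := sN_cast α hirr h0 h2 (k + 1)
        have e3 := sB_succ α k hk
        omega
      have hcastqR : (((pq α k).toNat : ℝ)) = (pq α k : ℝ) := by exact_mod_cast hcastq
      have hbe : bet α k * bet α (k + 1) = 1 - (pq α k : ℝ) * bet α k := by
        rw [bet_succ_eq, mul_sub, mul_inv_cancel₀ (ne_of_gt hβ.2.1)]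
        ring
      have hlamp := lam_pos α hirr h0 h1 k
      rcases Nat.even_or_odd k with hev | hod
      · -- k even, so start of phase k has r big; k+1 odd
        obtain ⟨hr0, hl0⟩ := hik.2 hev
        obtain ⟨hr1, hl1⟩ := inner_r α (sN α k + 1) (by omega) (lam α k) (bet α k)
          hlamp hβ.2.1 (pq α k) hq hr0 hl0 (pq α k).toNat (le_of_eq hcastq)
        rw [hidx] at hr1 hl1
        constructor
        · intro _
          refine ⟨?_, ?_⟩
          · rw [hl1, lam_succ α k hk]
          · rw [hr1, hcastqR, lam_succ α k hk, mul_assoc, hbe]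
        · intro he
          exact absurd (Nat.even_add_one.mp he) (by simpa using hev)
      · -- k odd, so start of phase k has l big; k+1 even
        obtain ⟨hl0, hr0⟩ := hik.1 hod
        obtain ⟨hl1, hr1⟩ := inner_l α (sN α k + 1) (by omega) (lam α k) (bet α k)
          hlamp hβ.2.1 (pq α k) hq hl0 hr0 (pq α k).toNat (le_of_eq hcastq)
        rw [hidx] at hr1 hl1
        constructor
        · intro ho
          exact absurd (Nat.odd_add_one.mp ho) (by simpa using hod)
        · intro _
          refine ⟨?_, ?_⟩
          · rw [hr1, lam_succ α k hk]
          · rw [hl1, hcastqR, lam_succ α k hk, mul_assoc, hbe]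

theorem sign_pattern_of_recursion
    (α : ℝ) (hirr : Irrational α) (h0 : 0 < α) (h2 : α < 1/2) :
    (∀ k n : ℕ, sB α k < (n : ℤ) → (n : ℤ) ≤ sB α (k + 1) →
      ((Even k → (sdi α n).l < (sdi α n).r) ∧ (Odd k → (sdi α n).r < (sdi α n).l))) ∧
    (∀ n : ℕ, 1 ≤ n → (sdi α n).l ≠ (sdi α n).r) := by
  have h1 : α < 1 := by linarith
  have part1 : ∀ k n : ℕ, sB α k < (n : ℤ) → (n : ℤ) ≤ sB α (k + 1) →
      ((Even k → (sdi α n).l < (sdi α n).r) ∧ (Odd k → (sdi α n).r < (sdi α n).l)) := by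
    intro k n hn1 hn2
    rcases Nat.eq_zero_or_pos k with rfl | hk
    · -- phase 0
      rw [sB_zero] at hn1
      rw [sB_one] at hn2
      have hn : 1 ≤ n := by omega
      have hj : ((n - 1 : ℕ) : ℤ) ≤ pq α 0 - 2 := by omega
      obtain ⟨hl, hr⟩ := phase0 α hirr h0 h2 (n - 1) hj
      rw [show n - 1 + 1 = n by omega] at hl hr
      constructor
      · intro _
        rw [hl, hr]
        have hq := pq_lt_inv α hirr h0 h1 0
        rw [bet_zero] at hq
        have h3 : (((n - 1 : ℕ) : ℝ) + 3) ≤ pq α 0 := by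
          exact_mod_cast (by omega : ((n - 1 : ℕ) : ℤ) + 3 ≤ pq α 0)
        have : (((n - 1 : ℕ) : ℝ) + 3) * α < 1 := by
          calc (((n - 1 : ℕ) : ℝ) + 3) * α < α⁻¹ * α := by
                apply mul_lt_mul_of_pos_right _ h0; linarith
            _ = 1 := inv_mul_cancel₀ (ne_of_gt h0)
        nlinarith
      · intro ho; exact absurd ho (by simp)
    · -- phase k ≥ 1
      rw [sB_succ α k hk] at hn2
      have hsN := sN_cast α hirr h0 h2 k
      have hq := pq_lt_inv α hirr h0 h1 k
      have hq1 := pq_pos α hirr h0 h1 k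
      have hβ := bet_props α hirr h0 h1 k
      have hlamp := lam_pos α hirr h0 h1 k
      have hnge : sN α k + 1 ≤ n := by omega
      set j : ℕ := n - (sN α k + 1) with hjdef
      have hidx : n = sN α k + 1 + j := by omega
      have hjle : (j : ℤ) ≤ pq α k - 1 := by omega
      have hjleR : ((j : ℝ) + 1) ≤ (pq α k : ℝ) := by
        exact_mod_cast (by omega : (j : ℤ) + 1 ≤ pq α k)
      have key : ((j : ℝ) + 1) * bet α k < 1 := by
        calc ((j : ℝ) + 1) * bet α k < (bet α k)⁻¹ * bet α k := by
              apply mul_lt_mul_of_pos_right _ hβ.2.1; linarith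
          _ = 1 := inv_mul_cancel₀ (ne_of_gt hβ.2.1)
      rcases Nat.even_or_odd k with hev | hod
      · obtain ⟨hr0, hl0⟩ := (phase_start α hirr h0 h2 k hk).2 hev
        obtain ⟨hr1, hl1⟩ := inner_r α (sN α k + 1) (by omega) (lam α k) (bet α k)
          hlamp hβ.2.1 (pq α k) hq hr0 hl0 j (by omega)
        rw [← hidx] at hr1 hl1
        constructor
        · intro _
          rw [hl1, hr1]
          have : bet α k < 1 - (j : ℝ) * bet α k := by nlinarith
          nlinarith
        · intro ho
          exact absurd (Nat.odd_iff.mp ho) (by simpa [Nat.even_iff] using hev)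
      · obtain ⟨hl0, hr0⟩ := (phase_start α hirr h0 h2 k hk).1 hod
        obtain ⟨hl1, hr1⟩ := inner_l α (sN α k + 1) (by omega) (lam α k) (bet α k)
          hlamp hβ.2.1 (pq α k) hq hl0 hr0 j (by omega)
        rw [← hidx] at hr1 hl1
        constructor
        · intro hev
          exact absurd (Nat.odd_iff.mp hod) (by simpa [Nat.even_iff] using hev)
        · intro _
          rw [hl1, hr1]
          have : bet α k < 1 - (j : ℝ) * bet α k := by nlinarith
          nlinarith
  refine ⟨part1, ?_⟩
  intro n hn
  have hgrow : ∀ m : ℕ, (m : ℤ) ≤ sB α (m + 1) := by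
    intro m
    induction m with
    | zero => rw [sB_one]; have := pq_zero_ge α h0 h2; omega
    | succ m ih =>
      rw [sB_succ α (m + 1) (by omega)]
      have := pq_pos α hirr h0 h1 (m + 1)
      omega
  have hex : ∃ m : ℕ, (n : ℤ) ≤ sB α (m + 1) := ⟨n, le_trans (by omega) (hgrow n)⟩
  classical
  set k := Nat.find hex with hkdef
  have hk2 : (n : ℤ) ≤ sB α (k + 1) := Nat.find_spec hex
  have hk1 : sB α k < (n : ℤ) := by
    rcases Nat.eq_zero_or_pos k with he | hpos
    · rw [he, sB_zero]; omega
    · have := Nat.find_min hex (m := k - 1) (by omega)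
      rw [show k - 1 + 1 = k by omega] at this
      omega
  obtain ⟨hev, hod⟩ := part1 k n hk1 hk2
  rcases Nat.even_or_odd k with h | h
  · exact ne_of_lt (hev h)
  · exact (ne_of_lt (hod h)).symm
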